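/- arXiv:1104.3343 — 4 statements merged into one kernel-verified Lean document; each statement's English description precedes it below -/
import Mathlib

section
/- Let G be a Polish group and suppose G = ⋃ₙ Aₙ where each Aₙ is universally measurable. Then there exist n and finitely many elements h₁, …, hₘ ∈ G such that h₁AₙAₙ⁻¹h₁⁻¹ ∪ … ∪ hₘAₙAₙ⁻¹hₘ⁻¹ is a neighbourhood of the identity in G. -/
open MeasureTheory Set Pointwise
open scoped ENNReal

def UniversallyMeasurable {G : Type*} [MeasurableSpace G] (A : Set G) : Prop :=
  ∀ μ : Measure G, IsProbabilityMeasure μ → NullMeasurableSet A μ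


instance : AddCommGroup Bool where
  add := xor
  zero := false
  neg := id
  add_assoc := by decide
  zero_add := by decide
  add_zero := by decide
  neg_add_cancel := by decide
  add_comm := by decide
  nsmul := nsmulRec
  zsmul := zsmulRec

instance : IsTopologicalAddGroup Bool where
  continuous_add := continuous_of_discreteTopology
  continuous_neg := continuous_of_discreteTopology

abbrev Omega := ℕ → Bool

noncomputable def nu : Measure Omega := Measure.addHaarMeasure ⊤

instance : IsProbabilityMeasure nu := ⟨by
  have := Measure.addHaarMeasure_self (K₀ := (⊤ : TopologicalSpace.PositiveCompacts Omega))
  simpa [nu, TopologicalSpace.PositiveCompacts.coe_top] using this⟩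

instance : nu.IsAddLeftInvariant := Measure.isAddLeftInvariant_addHaarMeasure ⊤

def flp (k : ℕ) (e : Omega) : Omega := fun j => xor (decide (j = k)) (e j)

lemma nu_flip (k : ℕ) (S : Set Omega) : nu (flp k ⁻¹' S) = nu S := by
  have : (flp k : Omega → Omega) = (fun e => ((fun j => decide (j = k)) + e)) := rfl
  rw [this, measure_preimage_add]

lemma flp_flp (k : ℕ) (e : Omega) : flp k (flp k e) = e := by
  funext j; simp [flp, ← Bool.xor_assoc]

lemma flip_lemma (B : Set Omega) (hB : NullMeasurableSet B nu) (hpos : nu B ≠ 0)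
    (Ks : Set ℕ) (hKs : ∀ j : ℕ, ∃ k ∈ Ks, j ≤ k)
    (hdisj : ∀ k ∈ Ks, B ∩ flp k ⁻¹' B = ∅) : False := by
  obtain ⟨B₀, hB₀sub, hB₀m, hB₀eq⟩ := hB.exists_measurable_subset_ae_eq
  have hc : nu B₀ = nu B := measure_congr hB₀eq
  have hc0 : nu B₀ ≠ 0 := by rw [hc]; exact hpos
  have hct : nu B₀ ≠ ⊤ := measure_ne_top _ _
  have hδ0 : nu B₀ / 6 ≠ 0 := by
    simp [ENNReal.div_eq_zero_iff, hc0]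
  obtain ⟨U, hBU, hUopen, hU⟩ := B₀.exists_isOpen_lt_add hct hδ0
  obtain ⟨C, hCB, hCcomp, hCm⟩ := hB₀m.exists_isCompact_lt_add hct hδ0
  -- cylinders around points of C inside U
  have hcyl : ∀ y : Omega, y ∈ C → ∃ I : Finset ℕ,
      IsOpen {z : Omega | ∀ i ∈ I, z i = y i} ∧ {z : Omega | ∀ i ∈ I, z i = y i} ⊆ U := by
    intro y hy
    obtain ⟨I, u, hu, hsub⟩ := isOpen_pi_iff.1 hUopen y (hBU (hCB hy))
    refine ⟨I, ?_, fun z hz => hsub fun i hi => ?_⟩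
    · have : {z : Omega | ∀ i ∈ I, z i = y i} = ⋂ i ∈ I, (fun z : Omega => z i) ⁻¹' {y i} := by
        ext z; simp [Set.mem_iInter]
      rw [this]
      exact isOpen_biInter_finset fun i _ =>
        (continuous_apply i).isOpen_preimage _ (isOpen_discrete _)
    · rw [Set.mem_setOf_eq] at hz
      rw [hz i hi]; exact (hu i hi).2
  choose! I hIopen hIsub using hcyl
  -- finite subcover
  obtain ⟨t, ht⟩ := hCcomp.elim_finite_subcover
      (fun y : C => {z : Omega | ∀ i ∈ I y, z i = (y : Omega) i})
      (fun y => hIopen y y.2)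
      (fun z hz => Set.mem_iUnion.2 ⟨⟨z, hz⟩, fun i _ => rfl⟩)
  set E : Set Omega := ⋃ y ∈ t, {z : Omega | ∀ i ∈ I y, z i = (y : Omega) i} with hE
  have hCE : C ⊆ E := by
    intro z hz
    obtain ⟨y, hyt, hy⟩ := Set.mem_iUnion₂.1 (ht hz)
    exact Set.mem_iUnion₂.2 ⟨y, hyt, hy⟩
  have hEU : E ⊆ U := Set.iUnion₂_subset fun y _ => hIsub y y.2
  -- choose a flip index beyond all cylinder coordinates
  set N : ℕ := (t.sup fun y => (I y).sup id) + 1 with hN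
  obtain ⟨k, hkKs, hkN⟩ := hKs N
  have hik : ∀ y ∈ t, ∀ i ∈ I y, i ≠ k := by
    intro y hyt i hi
    have h1 : i ≤ (I y).sup id := Finset.le_sup (f := id) hi
    have h2 : (I y).sup id ≤ t.sup fun y => (I y).sup id := Finset.le_sup (f := fun y : ↥C => (I (y : Omega)).sup id) hyt
    omega
  have hflipE : flp k ⁻¹' E = E := by
    rw [hE, Set.preimage_iUnion₂]
    refine Set.iUnion₂_congr fun y hyt => ?_
    ext z
    simp only [Set.mem_preimage, Set.mem_setOf_eq, flp]
    constructor
    · intro h i hi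
      have := h i hi
      rwa [decide_eq_false (hik y hyt i hi), Bool.false_xor] at this
    · intro h i hi
      rw [decide_eq_false (hik y hyt i hi), Bool.false_xor]
      exact h i hi
  -- disjointness of C and its flip
  have hCdisj : C ∩ flp k ⁻¹' C = ∅ := by
    apply Set.eq_empty_of_subset_empty
    rw [← hdisj k hkKs]
    exact Set.inter_subset_inter (hCB.trans hB₀sub)
      (Set.preimage_mono (hCB.trans hB₀sub))
  -- E is covered by the two "off" parts
  have hEsplit : E ⊆ (E \ C) ∪ (E \ flp k ⁻¹' C) := by
    intro z hz
    by_cases h1 : z ∈ C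
    · by_cases h2 : z ∈ flp k ⁻¹' C
      · exact absurd (Set.mem_inter h1 h2) (by rw [hCdisj]; exact Set.notMem_empty z)
      · exact Or.inr ⟨hz, h2⟩
    · exact Or.inl ⟨hz, h1⟩
  have hEflip : nu (E \ flp k ⁻¹' C) = nu (E \ C) := by
    have : E \ flp k ⁻¹' C = flp k ⁻¹' (E \ C) := by
      rw [Set.preimage_diff, hflipE]
    rw [this, nu_flip]
  have hEle : nu E ≤ 2 * nu (E \ C) := by
    calc nu E ≤ nu ((E \ C) ∪ (E \ flp k ⁻¹' C)) := measure_mono hEsplit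
    _ ≤ nu (E \ C) + nu (E \ flp k ⁻¹' C) := measure_union_le _ _
    _ = 2 * nu (E \ C) := by rw [hEflip, two_mul]
  have hEC_le : nu (E \ C) ≤ nu (U \ C) := measure_mono (Set.diff_subset_diff_left hEU)
  -- ν C + ν (U \ C) = ν U
  have hCm' : MeasurableSet C := hCcomp.isClosed.measurableSet
  have hUsum : nu C + nu (U \ C) = nu U := by
    rw [← measure_union (Set.disjoint_sdiff_right) (hUopen.measurableSet.diff hCm')]
    congr 1
    rw [Set.union_diff_cancel (hCB.trans hBU)]
  have hUC : nu (U \ C) < 2 * (nu B₀ / 6) := by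
    have h1 : nu C + nu (U \ C) < nu C + 2 * (nu B₀ / 6) := by
      rw [hUsum]
      calc nu U < nu B₀ + nu B₀ / 6 := hU
      _ < (nu C + nu B₀ / 6) + nu B₀ / 6 := by
            exact ENNReal.add_lt_add_right (by simp [ENNReal.div_eq_top, hct]) hCm
      _ = nu C + 2 * (nu B₀ / 6) := by ring
    exact lt_of_add_lt_add_left h1
  have hElt : nu E < 4 * (nu B₀ / 6) := by
    calc nu E ≤ 2 * nu (E \ C) := hEle
    _ ≤ 2 * nu (U \ C) := by exact mul_le_mul_right hEC_le 2
    _ < 2 * (2 * (nu B₀ / 6)) := by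
        refine ENNReal.mul_lt_mul_right (a := 2) (by norm_num) (by norm_num) hUC
    _ = 4 * (nu B₀ / 6) := by ring
  have hfinal : nu B₀ < 5 * (nu B₀ / 6) := by
    calc nu B₀ < nu C + nu B₀ / 6 := hCm
    _ ≤ nu E + nu B₀ / 6 := add_le_add_left (measure_mono hCE) _
    _ ≤ 4 * (nu B₀ / 6) + nu B₀ / 6 := add_le_add_left hElt.le _
    _ = 5 * (nu B₀ / 6) := by ring
  have : (5 : ℝ≥0∞) * (nu B₀ / 6) ≤ nu B₀ := by
    rw [← mul_div_assoc]
    refine ENNReal.div_le_of_le_mul ?_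
    calc (5 : ℝ≥0∞) * nu B₀ ≤ 6 * nu B₀ := mul_le_mul_left (by norm_num) _
    _ = nu B₀ * 6 := mul_comm _ _
  exact absurd hfinal (not_lt.2 this)

lemma flp_apply_ne (k j : ℕ) (e : Omega) (h : j ≠ k) : flp k e j = e j := by
  simp [flp, h]

lemma flp_apply_self (k : ℕ) (e : Omega) : flp k e k = !(e k) := by
  simp [flp]

section Grp
variable {G : Type*} [Group G]

def Fp (s : ℕ → G) (k : ℕ) (e : Omega) : G :=
  ((List.range k).map (fun j => if e j = true then s j else 1)).prod

lemma Fp_zero (s : ℕ → G) (e : Omega) : Fp s 0 e = 1 := rfl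

lemma Fp_succ (s : ℕ → G) (k : ℕ) (e : Omega) :
    Fp s (k + 1) e = Fp s k e * (if e k = true then s k else 1) := by
  simp [Fp, List.range_succ]

lemma Fp_congr (s : ℕ → G) (k : ℕ) (e e' : Omega) (h : ∀ j < k, e j = e' j) :
    Fp s k e = Fp s k e' := by
  unfold Fp
  congr 1
  apply List.map_congr_left
  intro j hj
  rw [h j (List.mem_range.1 hj)]

lemma Fp_congr_fun (s s' : ℕ → G) (k : ℕ) (e : Omega) (h : ∀ j < k, s j = s' j) :
    Fp s k e = Fp s' k e := by
  unfold Fp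
  congr 1
  apply List.map_congr_left
  intro j hj
  rw [h j (List.mem_range.1 hj)]

lemma Fp_flp (s : ℕ → G) (k m : ℕ) (e : Omega) (hm : k + 1 ≤ m) :
    Fp s m (flp k e) = (Fp s (k + 1) (flp k e) * (Fp s (k + 1) e)⁻¹) * Fp s m e := by
  induction m with
  | zero => omega
  | succ m ih =>
    rcases Nat.lt_or_ge m (k+1) with hlt | hge
    · have : m = k := by omega
      subst this
      group
    · have hmk : m ≠ k := by omega
      rw [Fp_succ, Fp_succ s m e, ih hge, flp_apply_ne k m e hmk, mul_assoc]
end Grp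

section Seq
variable {G : Type*} [Group G] [MetricSpace G] [IsTopologicalGroup G]

lemma exists_good_seq (S : ℕ → Set G)
    (key : ∀ (n : ℕ) (F : Finset G), ∀ V ∈ nhds (1 : G),
      ∃ x ∈ V, ∀ P ∈ F, P * x * P⁻¹ ∉ S n) :
    ∃ h : ℕ → G, ∀ k : ℕ,
      (∀ e : Omega, dist (Fp h k e * h k) (Fp h k e) < (1/2 : ℝ)^k) ∧
      (∀ e : Omega, Fp h k e * h k * (Fp h k e)⁻¹ ∉ S (Nat.unpair k).1) := by
  -- one-step picker
  have pickspec : ∀ (s : ℕ → G) (k : ℕ), ∃ x : G,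
      (∀ e : Omega, dist (Fp s k e * x) (Fp s k e) < (1/2 : ℝ)^k) ∧
      (∀ e : Omega, Fp s k e * x * (Fp s k e)⁻¹ ∉ S (Nat.unpair k).1) := by
    classical
    intro s k
    set ext : (Fin k → Bool) → Omega := fun v j => if hj : j < k then v ⟨j, hj⟩ else false with hext
    have hFpe : ∀ e : Omega, Fp s k e = Fp s k (ext fun i => e i) := by
      intro e
      apply Fp_congr
      intro j hj
      simp [ext, hj]
    set V : Set G := ⋂ v : Fin k → Bool, {x : G | dist (Fp s k (ext v) * x) (Fp s k (ext v)) < (1/2 : ℝ)^k} with hV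
    have hVnhds : V ∈ nhds (1 : G) := by
      refine IsOpen.mem_nhds ?_ ?_
      · apply isOpen_iInter_of_finite
        intro v
        have : {x : G | dist (Fp s k (ext v) * x) (Fp s k (ext v)) < (1/2 : ℝ)^k}
            = (fun x : G => dist (Fp s k (ext v) * x) (Fp s k (ext v))) ⁻¹' Set.Iio ((1/2 : ℝ)^k) := rfl
        rw [this]
        exact ((continuous_const.mul continuous_id).dist continuous_const).isOpen_preimage _ isOpen_Iio
      · refine Set.mem_iInter.2 fun v => ?_
        simp only [Set.mem_setOf_eq, mul_one, dist_self]
        positivity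
    obtain ⟨x, hxV, hxF⟩ := key (Nat.unpair k).1
      (Finset.image (fun v : Fin k → Bool => Fp s k (ext v)) Finset.univ) V hVnhds
    refine ⟨x, fun e => ?_, fun e => ?_⟩
    · rw [hFpe e]
      exact Set.mem_iInter.1 hxV (fun i => e i)
    · rw [hFpe e]
      exact hxF _ (Finset.mem_image.2 ⟨(fun i : Fin k => e i), Finset.mem_univ _, rfl⟩)
  choose pick hpick1 hpick2 using pickspec
  -- build the sequence by recursion
  set st : ℕ → (ℕ → G) := fun k => Nat.rec (fun _ => 1) (fun k sk => Function.update sk k (pick sk k)) k with hst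
  set h : ℕ → G := fun k => st (k + 1) k with hh
  have hagree : ∀ m k, k < m → st m k = h k := by
    intro m
    induction m with
    | zero => omega
    | succ m ih =>
      intro k hk
      rcases Nat.lt_or_ge k m with hlt | hge
      · have h1 : st (m + 1) k = st m k := by
          show Function.update (st m) m (pick (st m) m) k = st m k
          exact Function.update_of_ne (by omega) _ _
        rw [h1, ih k hlt]
      · have : k = m := by omega
        subst this
        rfl
  have hFph : ∀ k e, Fp h k e = Fp (st k) k e :=
    fun k e => Fp_congr_fun h (st k) k e (fun j hj => (hagree k j hj).symm)
  have hhk : ∀ k, h k = pick (st k) k := by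
    intro k
    show Function.update (st k) k (pick (st k) k) k = pick (st k) k
    exact Function.update_self _ _ _
  refine ⟨h, fun k => ⟨fun e => ?_, fun e => ?_⟩⟩
  · rw [hFph k e, hhk k]; exact hpick1 (st k) k e
  · rw [hFph k e, hhk k]; exact hpick2 (st k) k e
end Seq

section Lim
variable {G : Type*} [Group G] [MetricSpace G] [IsTopologicalGroup G] [CompleteSpace G]

lemma exists_limit (h : ℕ → G)
    (cond1 : ∀ k, ∀ e : Omega, dist (Fp h k e * h k) (Fp h k e) < (1/2 : ℝ)^k) :
    ∃ f : Omega → G, Continuous f ∧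
      (∀ e, Filter.Tendsto (fun m => Fp h m e) Filter.atTop (nhds (f e))) := by
  have hstep : ∀ e : Omega, ∀ m, dist (Fp h m e) (Fp h (m+1) e) ≤ 1 * (1/2 : ℝ)^m := by
    intro e m
    rw [Fp_succ]
    by_cases hem : e m = true
    · rw [if_pos hem, dist_comm, one_mul]
      exact (cond1 m e).le
    · rw [if_neg hem, mul_one, dist_self, one_mul]
      positivity
  have hcau : ∀ e : Omega, CauchySeq (fun m => Fp h m e) :=
    fun e => cauchySeq_of_le_geometric (1/2 : ℝ) 1 (by norm_num) (hstep e)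
  have hlim : ∀ e : Omega, ∃ x : G, Filter.Tendsto (fun m => Fp h m e) Filter.atTop (nhds x) :=
    fun e => cauchySeq_tendsto_of_complete (hcau e)
  choose f hf using hlim
  refine ⟨f, ?_, hf⟩
  have hdist : ∀ (e : Omega) (m : ℕ), dist (Fp h m e) (f e) ≤ 1 * (1/2 : ℝ)^m / (1 - 1/2) :=
    fun e m => dist_le_of_le_geometric_of_tendsto (1/2 : ℝ) 1 (by norm_num) (hstep e) (hf e) m
  rw [continuous_iff_continuousAt]
  intro e
  rw [ContinuousAt, Metric.tendsto_nhds]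
  intro ε hε
  obtain ⟨k, hk⟩ := exists_pow_lt_of_lt_one (by positivity : (0:ℝ) < ε/4) (by norm_num : (1/2 : ℝ) < 1)
  have hCY : {x : Omega | ∀ j < k, x j = e j} ∈ nhds e := by
    have heq : {x : Omega | ∀ j < k, x j = e j}
        = ⋂ j ∈ Finset.range k, (fun x : Omega => x j) ⁻¹' {e j} := by
      ext x; simp
    rw [heq]
    refine IsOpen.mem_nhds ?_ ?_
    · exact isOpen_biInter_finset fun j _ =>
        (continuous_apply j).isOpen_preimage _ (isOpen_discrete _)
    · simp
  filter_upwards [hCY] with x hx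
  have hFpeq : Fp h k x = Fp h k e := Fp_congr h k x e hx
  have d1 := hdist x k
  have d2 := hdist e k
  rw [hFpeq] at d1
  have := dist_triangle_left (f x) (f e) (Fp h k e)
  have hkk : (1:ℝ) * (1/2)^k / (1 - 1/2) = 2 * (1/2)^k := by
    field_simp
    ring
  rw [hkk] at d1 d2
  have : dist (f x) (f e) < ε := by
    have h4 : (4:ℝ) * (1/2)^k < ε := by linarith [hk]
    calc dist (f x) (f e) ≤ dist (Fp h k e) (f x) + dist (Fp h k e) (f e) :=
          dist_triangle_left _ _ _
    _ ≤ 2 * (1/2)^k + 2 * (1/2)^k := by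
          have hco : dist (Fp h k e) (f x) = dist (f x) (Fp h k e) := dist_comm _ _
          linarith
    _ < ε := by linarith
  exact this

lemma f_flp (h : ℕ → G) (f : Omega → G)
    (hf : ∀ e, Filter.Tendsto (fun m => Fp h m e) Filter.atTop (nhds (f e)))
    (k : ℕ) (e : Omega) :
    f (flp k e) = (Fp h (k+1) (flp k e) * (Fp h (k+1) e)⁻¹) * f e := by
  set c : G := Fp h (k+1) (flp k e) * (Fp h (k+1) e)⁻¹ with hc
  have h1 : Filter.Tendsto (fun m => Fp h m (flp k e)) Filter.atTop (nhds (f (flp k e))) := hf _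
  have h2 : Filter.Tendsto (fun m => c * Fp h m e) Filter.atTop (nhds (c * f e)) :=
    (hf e).const_mul c
  have hev : (fun m => c * Fp h m e) =ᶠ[Filter.atTop] (fun m => Fp h m (flp k e)) := by
    filter_upwards [Filter.eventually_ge_atTop (k+1)] with m hm
    exact (Fp_flp h k m e hm).symm
  exact tendsto_nhds_unique h1 (Filter.Tendsto.congr' hev h2)
end Lim

lemma mem_mul_inv_symm {G : Type*} [Group G] {A : Set G} {x : G} (hx : x ∈ A * A⁻¹) :
    x⁻¹ ∈ A * A⁻¹ := by
  have hS : (A * A⁻¹)⁻¹ = A * A⁻¹ := by rw [mul_inv_rev, inv_inv]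
  rw [← hS]
  exact Set.inv_mem_inv.2 hx

/-- Christensen's theorem. -/
theorem christensen_cover
    {G : Type*} [Group G] [TopologicalSpace G] [IsTopologicalGroup G] [PolishSpace G]
    [MeasurableSpace G] [BorelSpace G] (A : ℕ → Set G)
    (hA : ∀ n, UniversallyMeasurable (A n)) (hcover : (⋃ n, A n) = Set.univ) :
    ∃ (n : ℕ) (m : ℕ) (h : Fin m → G),
      (⋃ i : Fin m, (fun x => h i * x * (h i)⁻¹) '' (A n * (A n)⁻¹)) ∈ nhds (1 : G) := by
  by_contra hcon
  push_neg at hcon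
  letI := TopologicalSpace.upgradeIsCompletelyMetrizable G
  have key : ∀ (n : ℕ) (F : Finset G), ∀ V ∈ nhds (1 : G),
      ∃ x ∈ V, ∀ P ∈ F, P * x * P⁻¹ ∉ A n * (A n)⁻¹ := by
    intro n F V hV
    by_contra hk
    push_neg at hk
    refine hcon n F.card (fun i => ((F.equivFin.symm i : G))⁻¹) ?_
    refine Filter.mem_of_superset hV ?_
    intro x hx
    obtain ⟨P, hPF, hPx⟩ := hk x hx
    refine Set.mem_iUnion.2 ⟨F.equivFin ⟨P, hPF⟩, P * x * P⁻¹, hPx, ?_⟩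
    have hsy : ((F.equivFin.symm (F.equivFin ⟨P, hPF⟩) : F) : G) = P := by
      rw [Equiv.symm_apply_apply]
    simp only [Equiv.symm_apply_apply]
    group
  obtain ⟨h, hcond⟩ := exists_good_seq (fun n => A n * (A n)⁻¹) key
  obtain ⟨f, hfc, hf⟩ := exists_limit h (fun k e => (hcond k).1 e)
  set μ : Measure G := nu.map f with hμ
  have hfm : Measurable f := hfc.measurable
  haveI hμp : IsProbabilityMeasure μ := Measure.isProbabilityMeasure_map hfm.aemeasurable
  have hμA : ∃ n, μ (A n) ≠ 0 := by
    by_contra hall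
    push_neg at hall
    have h0 : μ (⋃ n, A n) = 0 := measure_iUnion_null hall
    rw [hcover] at h0
    simp [measure_univ] at h0
  obtain ⟨n, hn⟩ := hμA
  obtain ⟨D, hDsub, hDm, hDeq⟩ := (hA n μ hμp).exists_measurable_subset_ae_eq
  set B : Set Omega := f ⁻¹' (A n) with hB
  have hAD := MeasureTheory.ae_eq_set.1 hDeq
  have hpre0 : ∀ S : Set G, μ S = 0 → nu (f ⁻¹' S) = 0 := fun S hS =>
    le_antisymm (le_trans (Measure.le_map_apply hfm.aemeasurable S) (le_of_eq hS)) zero_le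
  have hBD : B =ᵐ[nu] f ⁻¹' D := by
    rw [MeasureTheory.ae_eq_set]
    constructor
    · rw [← Set.preimage_diff]
      exact hpre0 _ hAD.2
    · rw [← Set.preimage_diff]
      exact hpre0 _ hAD.1
  have hBnm : NullMeasurableSet B nu := ((hfm hDm).nullMeasurableSet).congr hBD.symm
  have hBval : nu B = μ (A n) := by
    rw [measure_congr hBD, ← Measure.map_apply hfm hDm, ← hμ, measure_congr hDeq]
  have hBpos : nu B ≠ 0 := by rw [hBval]; exact hn
  set Ks : Set ℕ := {k | (Nat.unpair k).1 = n} with hKsdef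
  have hKs : ∀ j, ∃ k ∈ Ks, j ≤ k := fun j =>
    ⟨Nat.pair n j, by simp [hKsdef, Nat.unpair_pair], Nat.right_le_pair n j⟩
  have hdisj : ∀ k ∈ Ks, B ∩ flp k ⁻¹' B = ∅ := by
    intro k hk
    have hkn : (Nat.unpair k).1 = n := hk
    rw [Set.eq_empty_iff_forall_notMem]
    rintro e ⟨he1, he2⟩
    have hmem : f (flp k e) * (f e)⁻¹ ∈ A n * (A n)⁻¹ :=
      Set.mul_mem_mul he2 (Set.inv_mem_inv.2 he1)
    have hid := f_flp h f hf k e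
    have hP' : Fp h k (flp k e) = Fp h k e :=
      Fp_congr h k _ e (fun j hj => flp_apply_ne k j e (by omega))
    have hc : f (flp k e) * (f e)⁻¹ = Fp h (k+1) (flp k e) * (Fp h (k+1) e)⁻¹ := by
      rw [hid]; group
    rw [Fp_succ h k (flp k e), Fp_succ h k e, hP', flp_apply_self] at hc
    have hSn : Fp h k e * h k * (Fp h k e)⁻¹ ∉ A n * (A n)⁻¹ := by
      have := (hcond k).2 e
      rwa [hkn] at this
    by_cases hek : e k = true
    · rw [hek] at hc
      simp at hc
      apply hSn
      have hx : (f (flp k e) * (f e)⁻¹)⁻¹ = Fp h k e * h k * (Fp h k e)⁻¹ := by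
        rw [hc]; group
      rw [← hx]
      exact mem_mul_inv_symm hmem
    · have hek' : e k = false := by
        cases hbool : e k
        · rfl
        · exact absurd hbool hek
      rw [hek'] at hc
      simp at hc
      apply hSn
      have hx : f (flp k e) * (f e)⁻¹ = Fp h k e * h k * (Fp h k e)⁻¹ := by
        rw [hc]
      rw [← hx]
      exact hmem
  exact flip_lemma B hBnm hBpos Ks hKs hdisj
end

section
/- Let G be a group, F ≤ G a subgroup, and g₁, …, gₙ ∈ G. Suppose that G can be covered by countably many sets of the form dFgᵢ with d ranging over a countable set D and i ≤ n, i.e., G = DFg₁ ∪ … ∪ DFgₙ for some countable D ⊆ G. Then F has countable index in G. -/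
open Set Pointwise

/-- Countable version of B. H. Neumann's lemma: if a group is covered by countably
many left cosets of subgroups all lying in a finite set `S` of subgroups, then some
subgroup in `S` has countable index. -/
theorem countable_neumann_aux {G : Type*} [Group G] (S : Finset (Subgroup G)) :
    ∀ {ι : Type*} [Countable ι] (H : ι → Subgroup G) (c : ι → G),
      (∀ i, H i ∈ S) → (⋃ i, c i • (H i : Set G)) = Set.univ →
      ∃ K ∈ S, Countable (G ⧸ K) := by
  classical
  induction S using Finset.strongInduction with
  | _ S ih =>
    intro ι _ H c hmem hcov
    have h1 : (1 : G) ∈ ⋃ i, c i • (H i : Set G) := hcov ▸ Set.mem_univ 1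
    rw [Set.mem_iUnion] at h1
    obtain ⟨i0, -⟩ := h1
    set K := H i0 with hK
    by_cases hA : ∀ x : G, ∃ i, H i = K ∧ x ∈ c i • (K : Set G)
    · refine ⟨K, hmem i0, ?_⟩
      have hsurj : Function.Surjective
          (fun i : {i // H i = K} => (QuotientGroup.mk (c i.1) : G ⧸ K)) := by
        intro q
        induction q using QuotientGroup.induction_on with
        | H x =>
          obtain ⟨i, hi, hx⟩ := hA x
          refine ⟨⟨i, hi⟩, ?_⟩
          simp only
          rw [QuotientGroup.eq]
          rw [Set.mem_smul_set_iff_inv_smul_mem, smul_eq_mul] at hx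
          exact hx
      exact hsurj.countable
    · push_neg at hA
      obtain ⟨x, hx⟩ := hA
      have hsub : ∀ y ∈ x • (K : Set G), ∃ j, H j ≠ K ∧ y ∈ c j • (H j : Set G) := by
        intro y hy
        have hy' : y ∈ ⋃ i, c i • (H i : Set G) := hcov ▸ Set.mem_univ y
        rw [Set.mem_iUnion] at hy'
        obtain ⟨j, hyj⟩ := hy'
        by_cases hj : H j = K
        · exfalso
          apply hx j hj
          rw [hj] at hyj
          rw [Set.mem_smul_set_iff_inv_smul_mem, smul_eq_mul] at hy hyj ⊢
          have heq : (c j)⁻¹ * x = ((c j)⁻¹ * y) * (x⁻¹ * y)⁻¹ := by group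
          rw [heq]
          exact K.mul_mem hyj (K.inv_mem hy)
        · exact ⟨j, hj, hyj⟩
      set ι' := {i : ι // H i ≠ K} ⊕ ({i : ι // H i = K} × {j : ι // H j ≠ K}) with hι'
      set H' : ι' → Subgroup G := Sum.elim (fun i => H i.1) (fun p => H p.2.1) with hH'
      set c' : ι' → G := Sum.elim (fun i => c i.1)
        (fun p => c p.1.1 * x⁻¹ * c p.2.1) with hc'
      have hmem' : ∀ i, H' i ∈ S.erase K := by
        rintro (i | p)
        · exact Finset.mem_erase.2 ⟨i.2, hmem _⟩
        · exact Finset.mem_erase.2 ⟨p.2.2, hmem _⟩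
      have hcov' : (⋃ i, c' i • (H' i : Set G)) = Set.univ := by
        ext z
        simp only [Set.mem_univ, iff_true, Set.mem_iUnion]
        have hz' : z ∈ ⋃ i, c i • (H i : Set G) := hcov ▸ Set.mem_univ z
        rw [Set.mem_iUnion] at hz'
        obtain ⟨i, hz⟩ := hz'
        by_cases hi : H i = K
        · have hz2 : x * ((c i)⁻¹ * z) ∈ x • (K : Set G) := by
            rw [Set.mem_smul_set_iff_inv_smul_mem, smul_eq_mul]
            rw [Set.mem_smul_set_iff_inv_smul_mem, smul_eq_mul, hi] at hz
            have : x⁻¹ * (x * ((c i)⁻¹ * z)) = (c i)⁻¹ * z := by group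
            rw [this]
            exact hz
          obtain ⟨j, hj, hzj⟩ := hsub _ hz2
          refine ⟨Sum.inr (⟨i, hi⟩, ⟨j, hj⟩), ?_⟩
          rw [Set.mem_smul_set_iff_inv_smul_mem, smul_eq_mul] at hzj ⊢
          simp only [hc', hH', Sum.elim_inr]
          have : (c i * x⁻¹ * c j)⁻¹ * z = (c j)⁻¹ * (x * ((c i)⁻¹ * z)) := by group
          rw [this]
          exact hzj
        · exact ⟨Sum.inl ⟨i, hi⟩, hz⟩
      obtain ⟨K', hK', hc⟩ := ih (S.erase K) (Finset.erase_ssubset (hmem i0)) H' c' hmem' hcov'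
      exact ⟨K', Finset.mem_of_mem_erase hK', hc⟩

theorem countable_index_of_cover
    {G : Type*} [Group G] (F : Subgroup G) {n : ℕ} (g : Fin n → G) (D : Set G)
    (hD : D.Countable)
    (hcover : (⋃ i : Fin n, D * (F : Set G) * {g i}) = Set.univ) :
    Countable (G ⧸ F) := by
  classical
  have hDc : Countable ↥D := hD.to_subtype
  -- conjugate subgroups
  set H : Fin n → Subgroup G := fun i => F.map (MulAut.conj (g i)⁻¹).toMonoidHom with hH
  set S : Finset (Subgroup G) := Finset.image H Finset.univ with hS
  have hcov2 : (⋃ p : ↥D × Fin n, ((p.1 : G) * g p.2) • ((H p.2 : Subgroup G) : Set G))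
      = Set.univ := by
    ext z
    simp only [Set.mem_univ, iff_true, Set.mem_iUnion]
    have hz : z ∈ ⋃ i : Fin n, D * (F : Set G) * {g i} := hcover ▸ Set.mem_univ z
    rw [Set.mem_iUnion] at hz
    obtain ⟨i, hz⟩ := hz
    obtain ⟨y, hy, w, hw, rfl⟩ := hz
    obtain ⟨d, hd, f, hf, rfl⟩ := hy
    rw [Set.mem_singleton_iff] at hw
    subst hw
    refine ⟨(⟨d, hd⟩, i), ?_⟩
    rw [Set.mem_smul_set_iff_inv_smul_mem, smul_eq_mul]
    refine ⟨f, hf, ?_⟩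
    simp only [MulEquiv.coe_toMonoidHom, MulAut.conj_apply]
    group
  obtain ⟨K, hK, hKc⟩ := countable_neumann_aux S (fun p : ↥D × Fin n => H p.2)
    (fun p : ↥D × Fin n => (p.1 : G) * g p.2)
    (fun p => Finset.mem_image_of_mem H (Finset.mem_univ p.2)) hcov2
  rw [hS, Finset.mem_image] at hK
  obtain ⟨i, -, hKi⟩ := hK
  subst hKi
  -- surjection G ⧸ H i → G ⧸ F via conjugation by g i
  have hsurj : Function.Surjective
      (fun q : G ⧸ H i => (QuotientGroup.mk (g i * q.out * (g i)⁻¹) : G ⧸ F)) := by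
    intro q
    induction q using QuotientGroup.induction_on with
    | H y =>
      refine ⟨QuotientGroup.mk ((g i)⁻¹ * y * g i), ?_⟩
      simp only
      set w := (QuotientGroup.mk ((g i)⁻¹ * y * g i) : G ⧸ H i).out with hw
      have hmem : ((g i)⁻¹ * y * g i)⁻¹ * w ∈ H i :=
        QuotientGroup.eq.mp (QuotientGroup.out_eq' (QuotientGroup.mk ((g i)⁻¹ * y * g i))).symm
      obtain ⟨f, hf, hfe⟩ := hmem
      simp only [MulEquiv.coe_toMonoidHom, MulAut.conj_apply, inv_inv] at hfe
      have hw2 : w = ((g i)⁻¹ * y * g i) * ((g i)⁻¹ * f * g i) := by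
        rw [hfe]; group
      rw [QuotientGroup.eq, hw2]
      have : (g i * ((g i)⁻¹ * y * g i * ((g i)⁻¹ * f * g i)) * (g i)⁻¹)⁻¹ * y = f⁻¹ := by
        group
      rw [this]
      exact F.inv_mem hf
  exact hsurj.countable
end

section
/- Let G be a group and H₁, …, Hₙ ≤ G subgroups such that G = C₁ ∪ … ∪ Cₘ where each Cⱼ is a left coset of some Hᵢ. Then some Hᵢ has finite index in G. -/
open Set Pointwise

/-- B. H. Neumann's lemma. -/
theorem neumann_lemma {G : Type*} [Group G] {n m : ℕ}
    (H : Fin n → Subgroup G) (C : Fin m → Set G)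
    (hcoset : ∀ j : Fin m, ∃ (i : Fin n) (a : G), C j = a • (H i : Set G))
    (hcover : (⋃ j : Fin m, C j) = Set.univ) :
    ∃ i : Fin n, (H i).FiniteIndex := by
  choose f a hfa using hcoset
  have hcovers : ⋃ j ∈ (Finset.univ : Finset (Fin m)), a j • ((H ∘ f) j : Set G) = Set.univ := by
    simp only [Finset.mem_univ, Set.iUnion_true, Function.comp_apply]
    rw [← hcover]
    exact Set.iUnion_congr fun j => (hfa j).symm
  obtain ⟨k, -, hk⟩ := Subgroup.exists_finiteIndex_of_leftCoset_cover hcovers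
  exact ⟨f k, hk⟩
end

section
/- Let G be a Polish group and N ≤ G a universally measurable normal subgroup of countable index. Then N is open in G. -/
open MeasureTheory Set Pointwise

/-! ### Auxiliary setup : the Cantor group `ℕ → ZMod 2` with its Haar probability measure -/

instance : TopologicalSpace (ZMod 2) := ⊥
instance : DiscreteTopology (ZMod 2) := ⟨rfl⟩

/-- The Cantor group. -/
abbrev CantorGrp : Type := ℕ → ZMod 2

/-- The Haar probability measure on the Cantor group. -/
noncomputable def cantorHaar : Measure CantorGrp :=
  ((Measure.addHaar : Measure CantorGrp) Set.univ)⁻¹ • Measure.addHaar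

lemma addHaar_univ_ne_zero :
    (Measure.addHaar : Measure CantorGrp) Set.univ ≠ 0 :=
  isOpen_univ.measure_ne_zero (Measure.addHaar : Measure CantorGrp) Set.univ_nonempty

instance : IsProbabilityMeasure cantorHaar := by
  constructor
  rw [cantorHaar, Measure.smul_apply, smul_eq_mul]
  exact ENNReal.inv_mul_cancel addHaar_univ_ne_zero (measure_ne_top _ _)

instance : cantorHaar.IsAddHaarMeasure := by
  rw [cantorHaar]
  refine Measure.IsAddHaarMeasure.smul _ ?_ ?_
  · simp only [ne_eq, ENNReal.inv_eq_zero]; exact measure_ne_top _ _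
  · simp only [ne_eq, ENNReal.inv_eq_top]; exact addHaar_univ_ne_zero

instance : cantorHaar.InnerRegular := by rw [cantorHaar]; infer_instance

/-! ### Partial products -/

section PartialProducts

variable {G : Type*} [Group G]

/-- The product `∏_{i ∈ [a, a+n)} (g i)^(e i)`. -/
def pp (g : ℕ → G) (e : CantorGrp) (a n : ℕ) : G :=
  ((List.range' a n).map (fun i => if e i = 1 then g i else 1)).prod

@[simp] lemma pp_zero (g : ℕ → G) (e : CantorGrp) (a : ℕ) : pp g e a 0 = 1 := rfl

lemma pp_succ (g : ℕ → G) (e : CantorGrp) (a n : ℕ) :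
    pp g e a (n + 1) = pp g e a n * (if e (a + n) = 1 then g (a + n) else 1) := by
  simp [pp, List.range'_concat, List.prod_append]

lemma pp_split (g : ℕ → G) (e : CantorGrp) (a m n : ℕ) :
    pp g e a (n + m) = pp g e a m * pp g e (a + m) n := by
  rw [pp, pp, pp, ← List.prod_append, ← List.map_append]
  rw [List.range'_append_1]
  rw [Nat.add_comm n m]

lemma pp_congr_e (g : ℕ → G) {e e' : CantorGrp} (a n : ℕ)
    (h : ∀ i, a ≤ i → i < a + n → e i = e' i) : pp g e a n = pp g e' a n := by
  unfold pp
  congr 1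
  apply List.map_congr_left
  intro i hi
  rw [List.mem_range'_1] at hi
  rw [h i hi.1 hi.2]

lemma pp_congr_g {g g' : ℕ → G} (e : CantorGrp) (a n : ℕ)
    (h : ∀ i, a ≤ i → i < a + n → g i = g' i) : pp g e a n = pp g' e a n := by
  unfold pp
  congr 1
  apply List.map_congr_left
  intro i hi
  rw [List.mem_range'_1] at hi
  rw [h i hi.1 hi.2]

lemma pp_eq_one (g : ℕ → G) {e : CantorGrp} (a n : ℕ)
    (h : ∀ i, a ≤ i → i < a + n → e i = 0) : pp g e a n = 1 := by
  apply List.prod_eq_one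
  intro x hx
  rw [List.mem_map] at hx
  obtain ⟨i, hi, rfl⟩ := hx
  rw [List.mem_range'_1] at hi
  rw [h i hi.1 hi.2]
  norm_num

/-- Iterated choice construction. -/
noncomputable def buildF (pick : ℕ → (ℕ → G) → G) : ℕ → ℕ → G
  | 0 => fun _ => 1
  | (n + 1) => Function.update (buildF pick n) n (pick n (buildF pick n))

/-- The chosen sequence. -/
noncomputable def gseq (pick : ℕ → (ℕ → G) → G) (n : ℕ) : G := buildF pick (n + 1) n

lemma buildF_agree (pick : ℕ → (ℕ → G) → G) :
    ∀ m n, n < m → buildF pick m n = gseq pick n := by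
  intro m
  induction m with
  | zero => omega
  | succ m ih =>
    intro n hn
    rcases Nat.lt_succ_iff_lt_or_eq.mp hn with h | h
    · show Function.update (buildF pick m) m (pick m (buildF pick m)) n = _
      rw [Function.update_of_ne (by omega)]
      exact ih n h
    · subst h; rfl

end PartialProducts

theorem univMeasurable_normal_countableIndex_isOpen
    {G : Type*} [Group G] [TopologicalSpace G] [IsTopologicalGroup G] [PolishSpace G]
    [MeasurableSpace G] [BorelSpace G] (N : Subgroup G) [N.Normal]
    (hN : UniversallyMeasurable (N : Set G)) (hindex : Countable (G ⧸ N)) :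
    IsOpen (N : Set G) := by
  by_contra hopen
  letI := TopologicalSpace.upgradeIsCompletelyMetrizable G
  have hN1 : (N : Set G) ∉ nhds (1 : G) := fun h => hopen (Subgroup.isOpen_of_mem_nhds N h)
  -- Step 1: at every stage we can pick a good next element
  have hex : ∀ (prev : ℕ → G) (n : ℕ), ∃ x : G, x ∉ N ∧
      ∀ e : CantorGrp, dist (pp (Function.update prev n x) e 0 n * x)
        (pp (Function.update prev n x) e 0 n) < (1/2 : ℝ) ^ n := by
    intro prev n
    -- words using `prev` below `n`
    set S : Set G := Set.range (fun v : Fin n → ZMod 2 =>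
      pp prev (fun i => if h : i < n then v ⟨i, h⟩ else 0) 0 n) with hS
    have hSfin : S.Finite := Set.finite_range _
    have hmemS : ∀ e : CantorGrp, pp prev e 0 n ∈ S := by
      intro e
      refine ⟨fun i => e i.1, ?_⟩
      apply pp_congr_e
      intro i h0 hi
      simp only [Nat.zero_add] at hi
      rw [dif_pos hi]
    have hV : {x : G | ∀ w ∈ S, dist (w * x) w < (1/2 : ℝ) ^ n} ∈ nhds (1 : G) := by
      have : {x : G | ∀ w ∈ S, dist (w * x) w < (1/2 : ℝ) ^ n}
          = ⋂ w ∈ S, {x : G | dist (w * x) w < (1/2 : ℝ) ^ n} := by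
        ext x; simp
      rw [this, Filter.biInter_mem hSfin]
      intro w _
      have hcont : Continuous fun x : G => dist (w * x) w :=
        (continuous_const.mul continuous_id).dist continuous_const
      have hopen' : IsOpen {x : G | dist (w * x) w < (1/2 : ℝ) ^ n} :=
        isOpen_lt hcont continuous_const
      refine hopen'.mem_nhds ?_
      simp only [Set.mem_setOf_eq, mul_one, dist_self]
      positivity
    have hnsub : ¬ ({x : G | ∀ w ∈ S, dist (w * x) w < (1/2 : ℝ) ^ n} ⊆ (N : Set G)) :=
      fun h => hN1 (Filter.mem_of_superset hV h)
    obtain ⟨x, hxV, hxN⟩ := Set.not_subset.mp hnsub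
    refine ⟨x, hxN, fun e => ?_⟩
    have hpp : pp (Function.update prev n x) e 0 n = pp prev e 0 n := by
      apply pp_congr_g
      intro i h0 hi
      simp only [Nat.zero_add] at hi
      rw [Function.update_of_ne (by omega)]
    rw [hpp]
    exact hxV _ (hmemS e)
  choose pick hpick1 hpick2 using hex
  set pk : ℕ → (ℕ → G) → G := fun n prev => pick prev n with hpk
  set g : ℕ → G := gseq pk with hg
  -- Step 2: the sequence is good
  have hGood : ∀ n, g n ∉ N ∧
      ∀ e : CantorGrp, dist (pp g e 0 n * g n) (pp g e 0 n) < (1/2 : ℝ) ^ n := by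
    intro n
    have hgn : g n = pick (buildF pk n) n := by
      show buildF pk (n + 1) n = _
      show Function.update (buildF pk n) n (pk n (buildF pk n)) n = _
      rw [Function.update_self]
    have hppeq : ∀ e : CantorGrp,
        pp g e 0 n = pp (Function.update (buildF pk n) n (pick (buildF pk n) n)) e 0 n := by
      intro e
      apply pp_congr_g
      intro i h0 hi
      simp only [Nat.zero_add] at hi
      rw [Function.update_of_ne (by omega)]
      exact (buildF_agree pk n i hi).symm
    constructor
    · rw [hgn]; exact hpick1 (buildF pk n) n
    · intro e
      rw [hppeq e, hgn]
      exact hpick2 (buildF pk n) n e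
  -- Step 3: Cauchy estimates
  have hstep : ∀ (e : CantorGrp) (a n : ℕ),
      dist (pp g e a (n + 1)) (pp g e a n) ≤ (1/2 : ℝ) ^ (a + n) := by
    intro e a n
    rw [pp_succ]
    by_cases h : e (a + n) = 1
    · rw [if_pos h]
      set e' : CantorGrp := fun i => if i < a then 0 else e i with he'
      have h1 : pp g e' 0 (a + n) = pp g e a n := by
        have := pp_split g e' 0 a n
        simp only [Nat.zero_add] at this
        rw [Nat.add_comm a n, this]
        rw [pp_eq_one g 0 a (fun i h0 hi => by
          show (if i < a then (0 : ZMod 2) else e i) = 0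
          rw [if_pos (by omega)]), one_mul]
        apply pp_congr_e
        intro i hai hi
        simp [he', Nat.not_lt.mpr hai]
      calc dist (pp g e a n * g (a + n)) (pp g e a n)
          = dist (pp g e' 0 (a + n) * g (a + n)) (pp g e' 0 (a + n)) := by rw [h1]
        _ ≤ (1/2 : ℝ) ^ (a + n) := le_of_lt ((hGood (a + n)).2 e')
    · rw [if_neg h, mul_one, dist_self]
      positivity
  have hcauchy : ∀ (e : CantorGrp) (a : ℕ), CauchySeq (fun m => pp g e a m) := by
    intro e a
    apply cauchySeq_of_le_geometric (1/2 : ℝ) ((1/2 : ℝ) ^ a) (by norm_num)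
    intro n
    rw [dist_comm]
    calc dist (pp g e a (n + 1)) (pp g e a n) ≤ (1/2 : ℝ) ^ (a + n) := hstep e a n
      _ = (1/2 : ℝ) ^ a * (1/2 : ℝ) ^ n := pow_add _ _ _
  -- Step 4: limits
  set T : ℕ → CantorGrp → G := fun a e => Filter.limUnder Filter.atTop (fun m => pp g e a m)
    with hT'
  have hTdef : ∀ (a : ℕ) (e : CantorGrp),
      T a e = Filter.limUnder Filter.atTop (fun m => pp g e a m) := fun a e => by rw [hT']
  have hT : ∀ (a : ℕ) (e : CantorGrp),
      Filter.Tendsto (fun m => pp g e a m) Filter.atTop (nhds (T a e)) := fun a e => by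
    rw [hTdef]
    exact (hcauchy e a).tendsto_limUnder
  have hfact : ∀ (e : CantorGrp) (k : ℕ), T 0 e = pp g e 0 (k + 1) * T (k + 1) e := by
    intro e k
    refine tendsto_nhds_unique (f := fun m => pp g e 0 (m + (k + 1))) (l := Filter.atTop)
      ?_ ?_
    · exact (hT 0 e).comp (Filter.tendsto_add_atTop_nat (k + 1))
    · have heq : ∀ m, pp g e 0 (m + (k + 1)) = pp g e 0 (k + 1) * pp g e (k + 1) m := by
        intro m
        have := pp_split g e 0 (k + 1) m
        simpa using this
      simp only [heq]
      exact (hT (k + 1) e).const_mul _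
  -- Step 5: flip lemma
  have hzmod : ∀ z : ZMod 2, z = 0 ∨ z = 1 := by decide
  have hflip : ∀ (x : G) (e : CantorGrp) (k : ℕ),
      x * T 0 e ∈ N → x * T 0 (e + Pi.single k 1) ∈ N → False := by
    intro x e k h1 h2
    set e' : CantorGrp := e + Pi.single k 1 with he'
    have he'ne : ∀ i, i ≠ k → e' i = e i := by
      intro i hi
      simp [he', Pi.single_eq_of_ne hi]
    have he'k : e' k = e k + 1 := by simp [he']
    have hTtail : T (k + 1) e' = T (k + 1) e := by
      have : (fun m => pp g e' (k + 1) m) = (fun m => pp g e (k + 1) m) := by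
        funext m
        exact pp_congr_e g (k + 1) m (fun i hi _ => he'ne i (by omega))
      rw [hTdef, hTdef, this]
    have hH : pp g e' 0 k = pp g e 0 k := pp_congr_e g 0 k
      (fun i _ hi => he'ne i (by omega))
    have h3 : (x * T 0 e)⁻¹ * (x * T 0 e') ∈ N := N.mul_mem (N.inv_mem h1) h2
    rw [hfact e k, hfact e' k, hTtail, pp_succ, pp_succ, hH] at h3
    simp only [Nat.zero_add] at h3
    set c : G := if e k = 1 then g k else 1 with hc
    set c' : G := if e' k = 1 then g k else 1 with hc'
    set Tt : G := T (k + 1) e with hTt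
    set H : G := pp g e 0 k with hHd
    have h4 : (x * (H * c * Tt))⁻¹ * (x * (H * c' * Tt)) = Tt⁻¹ * (c⁻¹ * c') * Tt := by
      group
    rw [h4] at h3
    have h5 : c⁻¹ * c' ∈ N := by
      have := (‹N.Normal›).conj_mem _ h3 Tt
      have heq : Tt * (Tt⁻¹ * (c⁻¹ * c') * Tt) * Tt⁻¹ = c⁻¹ * c' := by group
      rwa [heq] at this
    have hk : g k ∈ N := by
      rcases hzmod (e k) with h | h
      · have : e' k = 1 := by rw [he'k, h]; decide
        rw [hc, hc'] at h5
        rw [if_neg (by rw [h]; decide), if_pos this, inv_one, one_mul] at h5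
        exact h5
      · have : e' k = 0 := by rw [he'k, h]; decide
        rw [hc, hc'] at h5
        rw [if_pos h, if_neg (by rw [this]; decide), mul_one] at h5
        exact (Subgroup.inv_mem_iff N).mp h5
    exact (hGood k).1 hk
  -- Step 6: measurability of the limit map
  have hppmeas : ∀ m : ℕ, Measurable (fun e : CantorGrp => pp g e 0 m) := by
    intro m
    induction m with
    | zero => simp only [pp_zero]; exact measurable_const
    | succ m ih =>
      have : (fun e : CantorGrp => pp g e 0 (m + 1))
          = fun e => pp g e 0 m * (if e m = 1 then g m else 1) := by
        funext e
        rw [pp_succ]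
        simp
      rw [this]
      apply ih.mul
      apply Measurable.ite _ measurable_const measurable_const
      exact measurable_pi_apply m (measurableSet_singleton 1)
  have hPmeas : Measurable (T 0) := by
    apply measurable_of_tendsto_metrizable (f := fun m (e : CantorGrp) => pp g e 0 m) hppmeas
    rw [tendsto_pi_nhds]
    exact fun e => hT 0 e
  -- Step 7: each "coset fiber" is null
  have hEnull : ∀ x : G, cantorHaar ((fun e => x * T 0 e) ⁻¹' (N : Set G)) = 0 := by
    intro x
    set q : CantorGrp → G := fun e => x * T 0 e with hq
    have hqm : Measurable q := measurable_const.mul hPmeas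
    have hprob : IsProbabilityMeasure (Measure.map q cantorHaar) :=
      Measure.isProbabilityMeasure_map hqm.aemeasurable
    have hmp : MeasurePreserving q cantorHaar (Measure.map q cantorHaar) := ⟨hqm, rfl⟩
    have hnm : NullMeasurableSet (q ⁻¹' (N : Set G)) cantorHaar :=
      (hN (Measure.map q cantorHaar) hprob).preimage hmp.quasiMeasurePreserving
    by_contra hne
    obtain ⟨E', hE'sub, hE'meas, hE'ae⟩ := hnm.exists_measurable_subset_ae_eq
    have hE'pos : 0 < cantorHaar E' := by
      rw [measure_congr hE'ae]
      exact pos_iff_ne_zero.mpr hne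
    have hsub := Measure.sub_mem_nhds_zero_of_addHaar_pos cantorHaar E' hE'meas hE'pos
    have htend : Filter.Tendsto (fun n => (Pi.single n (1 : ZMod 2) : CantorGrp))
        Filter.atTop (nhds (0 : CantorGrp)) := by
      rw [tendsto_pi_nhds]
      intro j
      apply Filter.Tendsto.congr' (f₁ := fun _ => (0 : ZMod 2))
      · filter_upwards [Filter.eventually_gt_atTop j] with n hn
        exact (Pi.single_eq_of_ne (M := fun _ : ℕ => ZMod 2) hn.ne 1).symm
      · exact tendsto_const_nhds
    have hmem : ∀ᶠ n in Filter.atTop, (Pi.single n (1 : ZMod 2) : CantorGrp) ∈ E' - E' :=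
      htend.eventually_mem hsub
    obtain ⟨n, hn⟩ := hmem.exists
    rw [Set.mem_sub] at hn
    obtain ⟨a, ha, b, hb, hab⟩ := hn
    have hba : a = b + (Pi.single n (1 : ZMod 2) : CantorGrp) := by
      rw [← hab]; abel
    have h1 : x * T 0 b ∈ N := hE'sub hb
    have h2 : x * T 0 (b + (Pi.single n (1 : ZMod 2) : CantorGrp)) ∈ N := by
      rw [← hba]; exact hE'sub ha
    exact hflip x b n h1 h2
  -- Step 8: conclusion
  have hcover : (Set.univ : Set CantorGrp) ⊆
      ⋃ (c : G ⧸ N), (fun e => (Quotient.out c)⁻¹ * T 0 e) ⁻¹' (N : Set G) := by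
    intro e _
    refine Set.mem_iUnion.mpr ⟨QuotientGroup.mk (T 0 e), ?_⟩
    show (Quotient.out (QuotientGroup.mk (T 0 e)))⁻¹ * T 0 e ∈ N
    rw [← QuotientGroup.eq]
    exact Quotient.out_eq' _
  have hzero : cantorHaar (Set.univ : Set CantorGrp) = 0 :=
    measure_mono_null hcover (measure_iUnion_null fun c => hEnull _)
  rw [measure_univ] at hzero
  exact one_ne_zero hzero
end
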